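/- arXiv:2006.04860 — 10 statements merged into one kernel-verified Lean document; each statement's English description precedes it below -/
import Mathlib

section
/- Let R : X → X be a linear isometry with R^m = Id (m ≥ 2), let M = Id − R, and let γ > 0. Then (Id + γM) is invertible and its inverse equals (1/((1+γ)^m − γ^m)) Σ_{k=0}^{m−1} (1+γ)^{m−1−k} γ^k R^k. -/
set_option synthInstance.maxHeartbeats 400000
set_option maxHeartbeats 1000000

/-- Resolvent of `γM` where `M = Id − R` and `R` is a linear isometry of finite order `m`. -/
theorem resolvent_of_gammaM
    {X : Type*} [NormedAddCommGroup X] [InnerProductSpace ℝ X] [CompleteSpace X]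
    (m : ℕ) (hm : 2 ≤ m) (R : X →L[ℝ] X) (hR : ∀ x, ‖R x‖ = ‖x‖) (hRm : R ^ m = 1)
    (γ : ℝ) (hγ : 0 < γ) :
    (1 + γ • (1 - R)) *
      (((1 + γ) ^ m - γ ^ m)⁻¹ •
        ∑ k ∈ Finset.range m, ((1 + γ) ^ (m - 1 - k) * γ ^ k) • R ^ k) = 1 ∧
    (((1 + γ) ^ m - γ ^ m)⁻¹ •
        ∑ k ∈ Finset.range m, ((1 + γ) ^ (m - 1 - k) * γ ^ k) • R ^ k) *
      (1 + γ • (1 - R)) = 1 := by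
  set a : ℝ := 1 + γ with ha
  set S : X →L[ℝ] X := ∑ k ∈ Finset.range m, (a ^ (m - 1 - k) * γ ^ k) • R ^ k with hS
  have hA : (1 : X →L[ℝ] X) + γ • (1 - R) = a • 1 - γ • R := by
    rw [ha, add_smul, one_smul, smul_sub]
    abel
  set f : ℕ → (X →L[ℝ] X) := fun k => (a ^ (m - k) * γ ^ k) • R ^ k with hf
  have hsub : ∀ k, k ∈ Finset.range m → m - 1 - k + 1 = m - k := by
    intro k hk
    rw [Finset.mem_range] at hk
    omega
  have hf0 : f 0 - f m = (a ^ m - γ ^ m) • 1 := by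
    simp [hf, hRm, sub_smul]
  have key1 : (a • 1 - γ • R) * S = (a ^ m - γ ^ m) • 1 := by
    rw [hS, Finset.mul_sum, Finset.sum_congr rfl (fun k hk => ?_),
      Finset.sum_range_sub' f, hf0]
    show (a • 1 - γ • R) * ((a ^ (m - 1 - k) * γ ^ k) • R ^ k) = f k - f (k + 1)
    simp only [hf, sub_mul, smul_mul_assoc, one_mul, mul_smul_comm, smul_smul]
    rw [show m - (k + 1) = m - 1 - k from by omega, ← hsub k hk, pow_succ,
      pow_succ γ k, pow_succ' R k]
    module
  have key2 : S * (a • 1 - γ • R) = (a ^ m - γ ^ m) • 1 := by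
    rw [hS, Finset.sum_mul, Finset.sum_congr rfl (fun k hk => ?_),
      Finset.sum_range_sub' f, hf0]
    show ((a ^ (m - 1 - k) * γ ^ k) • R ^ k) * (a • 1 - γ • R) = f k - f (k + 1)
    simp only [hf, mul_sub, smul_mul_assoc, mul_smul_comm, mul_one, smul_smul]
    rw [show m - (k + 1) = m - 1 - k from by omega, ← hsub k hk, pow_succ,
      pow_succ γ k, pow_succ R k]
    module
  have hc : a ^ m - γ ^ m ≠ 0 := by
    have : γ ^ m < a ^ m := by
      apply pow_lt_pow_left₀ _ (le_of_lt hγ)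
      · omega
      · rw [ha]; linarith
    linarith
  constructor
  · rw [hA, mul_smul_comm, key1, smul_smul, inv_mul_cancel₀ hc, one_smul]
  · rw [hA, smul_mul_assoc, key2, smul_smul, inv_mul_cancel₀ hc, one_smul]
end

section
/- With R a linear isometry of order m and M = Id − R, for every x ∈ X, J_{γM} x → P_D x as γ → +∞, where P_D = (1/m) Σ_{k=0}^{m−1} R^k is the orthogonal projection onto D = Fix R. -/
open Filter Finset Topology
set_option synthInstance.maxHeartbeats 1000000
set_option maxHeartbeats 1000000

-- auxiliary: the telescoping inverse identity
lemma aux_inverse {X : Type*} [NormedAddCommGroup X] [NormedSpace ℝ X]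
    (m : ℕ) (hm : 2 ≤ m) (R : X →L[ℝ] X) (hRm : R ^ m = 1) (γ : ℝ) (hγ : 0 < γ) :
    (1 + γ • (1 - R)) *
      ((((1+γ)^m - γ^m)⁻¹ : ℝ) • ∑ k ∈ Finset.range m, (((1+γ)^(m-1-k) * γ^k) : ℝ) • R ^ k) = 1 := by
  have hd : (0:ℝ) < (1+γ)^m - γ^m := by
    have : γ^m < (1+γ)^m := pow_lt_pow_left₀ (by linarith) hγ.le (by omega)
    linarith
  have h1 : (1 + γ • ((1:X →L[ℝ] X) - R)) = (1+γ) • (1:X →L[ℝ] X) - γ • R := by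
    rw [smul_sub, add_smul, one_smul]; abel
  rw [h1, mul_smul_comm]
  have key : ((1+γ) • (1:X →L[ℝ] X) - γ • R) * (∑ k ∈ Finset.range m, (((1+γ)^(m-1-k) * γ^k) : ℝ) • R ^ k)
      = (((1+γ)^m - γ^m) : ℝ) • 1 := by
    have : ((1+γ) • (1:X →L[ℝ] X) - γ • R) * (∑ k ∈ Finset.range m, (((1+γ)^(m-1-k) * γ^k) : ℝ) • R ^ k)
        = ∑ k ∈ Finset.range m,
            ((((1+γ)^(m-k) * γ^k) : ℝ) • R ^ k - (((1+γ)^(m-(k+1)) * γ^(k+1)) : ℝ) • R ^ (k+1)) := by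
      rw [sub_mul, Finset.mul_sum, Finset.mul_sum, ← Finset.sum_sub_distrib]
      refine Finset.sum_congr rfl fun k hk => ?_
      have hk' := Finset.mem_range.mp hk
      have e1 : (m - k) = (m - 1 - k) + 1 := by omega
      have e2 : (m - (k+1)) = m - 1 - k := by omega
      simp only [e1, e2, smul_mul_assoc, mul_smul_comm, one_mul, smul_smul, ← pow_succ']
      congr 2 <;> ring
    rw [this, Finset.sum_range_sub' (fun k => (((1+γ)^(m-k) * γ^k) : ℝ) • R ^ k)]
    simp [hRm, sub_smul]
  rw [key, smul_smul, inv_mul_cancel₀ (ne_of_gt hd), one_smul]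

lemma aux_coeff_tendsto (m k : ℕ) (hm : 2 ≤ m) (hk : k < m) :
    Tendsto (fun γ : ℝ => (((1+γ)^m - γ^m)⁻¹ * ((1+γ)^(m-1-k) * γ^k)))
      atTop (nhds ((m : ℝ)⁻¹)) := by
  have hm0 : (m:ℝ) ≠ 0 := by positivity
  -- limit of base
  have hbase : Tendsto (fun γ : ℝ => 1 + γ⁻¹) atTop (nhds (1:ℝ)) := by
    have h0 : Tendsto (fun γ : ℝ => γ⁻¹) atTop (nhds (0:ℝ)) := tendsto_inv_atTop_zero
    simpa using h0.const_add 1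
  have hpow : Tendsto (fun γ : ℝ => (1+γ⁻¹)^(m-1-k)) atTop (nhds (1:ℝ)) := by
    simpa using hbase.pow (m-1-k)
  have hslope : Tendsto (fun γ : ℝ => ((1+γ⁻¹)^m - 1)/γ⁻¹) atTop (nhds (m:ℝ)) := by
    have h1 : HasDerivAt (fun y : ℝ => y^m) (m * 1^(m-1)) 1 := hasDerivAt_pow m 1
    have h2 := hasDerivAt_iff_tendsto_slope.mp h1
    have h3 : Tendsto (fun γ : ℝ => 1 + γ⁻¹) atTop (𝓝[≠] (1:ℝ)) := by
      apply tendsto_nhdsWithin_of_tendsto_nhds_of_eventually_within _ hbase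
      filter_upwards [eventually_gt_atTop 0] with γ hγ
      have : γ⁻¹ ≠ 0 := by positivity
      simp only [Set.mem_compl_iff, Set.mem_singleton_iff]
      intro h; exact this (by linarith)
    have h4 := h2.comp h3
    have h5 : Tendsto (fun γ : ℝ => ((1+γ⁻¹)^m - 1)/γ⁻¹) atTop (nhds (↑m * 1 ^ (m-1))) := by
      refine h4.congr fun γ => ?_
      simp only [slope_def_field, Function.comp]
      ring_nf
    simpa using h5
  have hmain : Tendsto (fun γ : ℝ => (1+γ⁻¹)^(m-1-k) * (((1+γ⁻¹)^m - 1)/γ⁻¹)⁻¹)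
      atTop (nhds ((m:ℝ)⁻¹)) := by
    simpa using hpow.mul (hslope.inv₀ hm0)
  refine hmain.congr' ?_
  filter_upwards [eventually_gt_atTop 0] with γ hγ
  have hγ0 : γ ≠ 0 := ne_of_gt hγ
  have hd : (0:ℝ) < (1+γ)^m - γ^m := by
    have : γ^m < (1+γ)^m := pow_lt_pow_left₀ (by linarith) hγ.le (by omega)
    linarith
  have hd0 : ((1+γ)^m - γ^m : ℝ) ≠ 0 := ne_of_gt hd
  obtain ⟨j, hj⟩ : ∃ j, m = k + j + 1 := ⟨m - k - 1, by omega⟩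
  have hjk : m - 1 - k = j := by omega
  have key : (1+γ⁻¹) = (1+γ)/γ := by field_simp; ring
  subst hj
  rw [hjk, key, div_pow, div_pow]
  rw [div_sub' (pow_ne_zero _ hγ0), mul_one, div_div, inv_div, div_mul_div_comm]
  rw [eq_comm, inv_mul_eq_div,
    div_eq_div_iff hd0 (mul_ne_zero (pow_ne_zero _ hγ0) hd0)]
  field_simp
  ring

/-- For `M = Id − R` with `R` a linear isometry of order `m`, the resolvent
`J_{γM}` converges pointwise, as `γ → +∞`, to `P_D = (1/m) Σ_{k=0}^{m−1} R^k`,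
the orthogonal projection onto `D = Fix R`. -/
theorem resolvent_tendsto_projection
    {X : Type*} [NormedAddCommGroup X] [InnerProductSpace ℝ X] [CompleteSpace X]
    (m : ℕ) (hm : 2 ≤ m) (R : X →L[ℝ] X) (hR : ∀ x, ‖R x‖ = ‖x‖) (hRm : R ^ m = 1)
    (J : ℝ → X →L[ℝ] X)
    (hJ : ∀ γ > (0 : ℝ), (1 + γ • (1 - R)) * J γ = 1 ∧ J γ * (1 + γ • (1 - R)) = 1)
    (x : X) :
    Filter.Tendsto (fun γ => J γ x) Filter.atTop
      (nhds (((m : ℝ)⁻¹ • ∑ k ∈ Finset.range m, R ^ k) x)) := by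
  have hfor : ∀ γ : ℝ, 0 < γ → J γ x = ∑ k ∈ Finset.range m,
      ((((1+γ)^m - γ^m)⁻¹ * ((1+γ)^(m-1-k) * γ^k)) : ℝ) • (R ^ k) x := by
    intro γ hγ
    have hT := aux_inverse m hm R hRm γ hγ
    have hJT := left_inv_eq_right_inv (hJ γ hγ).2 hT
    rw [hJT]
    simp only [ContinuousLinearMap.smul_apply, ContinuousLinearMap.sum_apply,
      Finset.smul_sum, smul_smul]
  have hlim : Tendsto (fun γ : ℝ => ∑ k ∈ Finset.range m,
      ((((1+γ)^m - γ^m)⁻¹ * ((1+γ)^(m-1-k) * γ^k)) : ℝ) • (R ^ k) x) atTop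
      (nhds (∑ k ∈ Finset.range m, (m : ℝ)⁻¹ • (R ^ k) x)) := by
    refine tendsto_finset_sum _ fun k hk => ?_
    exact (aux_coeff_tendsto m k hm (Finset.mem_range.mp hk)).smul_const _
  have hRHS : ((m : ℝ)⁻¹ • ∑ k ∈ Finset.range m, R ^ k) x
      = ∑ k ∈ Finset.range m, (m : ℝ)⁻¹ • (R ^ k) x := by
    simp [ContinuousLinearMap.smul_apply, ContinuousLinearMap.sum_apply, Finset.smul_sum]
  rw [hRHS]
  refine hlim.congr' ?_
  filter_upwards [eventually_gt_atTop 0] with γ hγ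
  exact (hfor γ hγ).symm
end

section
/- With R a linear isometry of order m, M = Id − R, and D = Fix R, the range of M equals D^⊥; in particular ran M is closed. -/
open RealInnerProductSpace Finset in
/-- The range of the displacement mapping `M = Id − R` equals `Dᗮ` where `D = Fix R`;
in particular the range of `M` is closed. -/
theorem range_displacement_eq_orthogonal
    {X : Type*} [NormedAddCommGroup X] [InnerProductSpace ℝ X] [CompleteSpace X]
    (m : ℕ) (hm : 2 ≤ m) (R : X →L[ℝ] X) (hR : ∀ x, ‖R x‖ = ‖x‖) (hRm : R ^ m = 1)
    (D : Submodule ℝ X) (hD : ∀ x, x ∈ D ↔ R x = x) :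
    LinearMap.range (((1 : X →L[ℝ] X) - R : X →L[ℝ] X) : X →ₗ[ℝ] X) = Dᗮ ∧
    IsClosed ((LinearMap.range (((1 : X →L[ℝ] X) - R : X →L[ℝ] X) : X →ₗ[ℝ] X) : Submodule ℝ X) : Set X) := by
  have hinner : ∀ x y : X, ⟪R x, R y⟫ = ⟪x, y⟫ := by
    intro x y
    rw [real_inner_eq_norm_add_mul_self_sub_norm_mul_self_sub_norm_mul_self_div_two,
      real_inner_eq_norm_add_mul_self_sub_norm_mul_self_sub_norm_mul_self_div_two x y,
      ← map_add, hR, hR, hR]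
  have hpow_apply : ∀ (k : ℕ) (x : X), (R ^ (k + 1)) x = (R ^ k) (R x) := by
    intro k x; rw [pow_succ, ContinuousLinearMap.mul_apply]
  have hinner_pow : ∀ (k : ℕ) (x y : X), ⟪(R ^ k) x, (R ^ k) y⟫ = ⟪x, y⟫ := by
    intro k
    induction k with
    | zero => intro x y; simp
    | succ n ih => intro x y; rw [hpow_apply, hpow_apply, ih, hinner]
  set S : X →L[ℝ] X := ∑ k ∈ range m, R ^ k with hS
  have hMS : ((1 : X →L[ℝ] X) - R) * S = 0 := by
    have h := mul_geom_sum R m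
    rw [hRm] at h
    rw [← hS] at h
    rw [show (1 : X →L[ℝ] X) - R = -(R - 1) from (neg_sub _ _).symm, neg_mul, h]
    simp
  have hRS : R * S = S := by
    have h : S - R * S = 0 := by
      have := hMS; rwa [sub_mul, one_mul] at this
    exact (sub_eq_zero.mp h).symm
  have hSD : ∀ y : X, S y ∈ D := by
    intro y
    rw [hD]
    rw [← ContinuousLinearMap.mul_apply, hRS]
  have hpowD : ∀ (k : ℕ) (d : X), d ∈ D → (R ^ k) d = d := by
    intro k d hd
    induction k with
    | zero => simp
    | succ n ih => rw [hpow_apply, (hD d).mp hd, ih]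
  have hSzero : ∀ y ∈ Dᗮ, S y = 0 := by
    intro y hy
    have hyd : ∀ d ∈ D, ⟪d, y⟫ = 0 := fun d hd => (Submodule.mem_orthogonal D y).mp hy d hd
    have h0 : ⟪S y, S y⟫ = 0 := by
      have hs : S y = ∑ k ∈ range m, (R ^ k) y := by
        rw [hS]; simp [ContinuousLinearMap.sum_apply]
      calc ⟪S y, S y⟫ = ∑ k ∈ range m, ⟪(R ^ k) y, S y⟫ := by nth_rewrite 1 [hs]; exact sum_inner _ _ _
        _ = ∑ k ∈ range m, (0 : ℝ) := by
            refine Finset.sum_congr rfl fun k _ => ?_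
            rw [← hpowD k (S y) (hSD y), hinner_pow, real_inner_comm]
            exact hyd (S y) (hSD y)
        _ = 0 := by simp
    exact inner_self_eq_zero.mp h0
  set T : X →L[ℝ] X := ∑ k ∈ range m, ∑ j ∈ range k, R ^ j with hT
  have hMT : ((1 : X →L[ℝ] X) - R) * T = m • (1 : X →L[ℝ] X) - S := by
    rw [hT, Finset.mul_sum]
    have hterm : ∀ k, ((1 : X →L[ℝ] X) - R) * ∑ j ∈ range k, R ^ j = 1 - R ^ k := by
      intro k
      have h := mul_geom_sum R k
      calc ((1 : X →L[ℝ] X) - R) * ∑ j ∈ range k, R ^ j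
          = -((R - 1) * ∑ j ∈ range k, R ^ j) := by rw [← neg_mul, neg_sub]
        _ = 1 - R ^ k := by rw [h, neg_sub]
    rw [Finset.sum_congr rfl fun k _ => hterm k, Finset.sum_sub_distrib, hS,
      Finset.sum_const, Finset.card_range]
  have hmne : (m : ℝ) ≠ 0 := by positivity
  have heq : LinearMap.range (((1 : X →L[ℝ] X) - R : X →L[ℝ] X) : X →ₗ[ℝ] X) = Dᗮ := by
    apply le_antisymm
    · rintro z hz
      obtain ⟨x, rfl⟩ := hz
      rw [Submodule.mem_orthogonal]
      intro d hd
      have : ((1 : X →L[ℝ] X) - R) x = x - R x := by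
        simp [ContinuousLinearMap.sub_apply]
      rw [ContinuousLinearMap.coe_coe, this, inner_sub_right]
      have : ⟪d, R x⟫ = ⟪d, x⟫ := by
        conv_lhs => rw [← (hD d).mp hd, hinner]
      rw [this]; ring
    · intro y hy
      refine ⟨(m : ℝ)⁻¹ • T y, ?_⟩
      have h1 : ((1 : X →L[ℝ] X) - R) (T y) = (m : ℝ) • y := by
        rw [← ContinuousLinearMap.mul_apply, hMT, ContinuousLinearMap.sub_apply,
          hSzero y hy, sub_zero, ContinuousLinearMap.smul_apply, ContinuousLinearMap.one_apply]
        exact (Nat.cast_smul_eq_nsmul ℝ m y).symm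
      rw [map_smul, ContinuousLinearMap.coe_coe, h1, smul_smul, inv_mul_cancel₀ hmne, one_smul]
  exact ⟨heq, heq ▸ D.isClosed_orthogonal⟩
end

section
/- With R a linear isometry of order m, M = Id − R, and D = Fix R: for every y ∈ D^⊥, the vector x = (1/m) Σ_{k=0}^{m−2} (m−1−k) R^k y satisfies M x = y. -/
open RealInnerProductSpace

/-- For `y ∈ Dᗮ`, the vector `x = (1/m) Σ_{k=0}^{m−2} (m−1−k) R^k y` satisfies `Mx = y`. -/
theorem explicit_preimage_displacement
    {X : Type*} [NormedAddCommGroup X] [InnerProductSpace ℝ X] [CompleteSpace X]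
    (m : ℕ) (hm : 2 ≤ m) (R : X →L[ℝ] X) (hR : ∀ x, ‖R x‖ = ‖x‖) (hRm : R ^ m = 1)
    (D : Submodule ℝ X) (hD : ∀ x, x ∈ D ↔ R x = x) :
    ∀ y ∈ Dᗮ,
      ((1 : X →L[ℝ] X) - R)
        ((m : ℝ)⁻¹ • ∑ k ∈ Finset.range (m - 1), ((m - 1 - k : ℕ) : ℝ) • (R ^ k) y) = y := by
  intro y hy
  have hinner : ∀ a b : X, ⟪R a, R b⟫ = ⟪a, b⟫ := by
    intro a b
    rw [real_inner_eq_norm_add_mul_self_sub_norm_mul_self_sub_norm_mul_self_div_two,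
      real_inner_eq_norm_add_mul_self_sub_norm_mul_self_sub_norm_mul_self_div_two a b,
      ← map_add, hR, hR, hR]
  have hRk : ∀ (k : ℕ) (a b : X), ⟪(R ^ k) a, (R ^ k) b⟫ = ⟪a, b⟫ := by
    intro k
    induction k with
    | zero => simp
    | succ j ih =>
      intro a b
      rw [pow_succ', ContinuousLinearMap.mul_apply, ContinuousLinearMap.mul_apply,
        hinner, ih]
  obtain ⟨n, rfl⟩ : ∃ n, m = n + 1 := ⟨m - 1, by omega⟩
  simp only [Nat.add_sub_cancel]
  set s : X := ∑ k ∈ Finset.range (n + 1), (R ^ k) y with hs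
  have hRs : R s = s := by
    have h1 : R s = ∑ k ∈ Finset.range (n + 1), (R ^ (k + 1)) y := by
      rw [hs, map_sum]
      refine Finset.sum_congr rfl fun k _ => ?_
      rw [pow_succ']
      rfl
    rw [h1, Finset.sum_range_succ, hRm, hs,
      Finset.sum_range_succ' (fun k => (R ^ k) y) n]
    simp
  have hsD : s ∈ D := (hD s).2 hRs
  have hys : ⟪y, s⟫ = 0 := by
    rw [real_inner_comm]
    exact (Submodule.mem_orthogonal D y).1 hy s hsD
  have hRks : ∀ k : ℕ, (R ^ k) s = s := by
    intro k
    induction k with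
    | zero => simp
    | succ j ih => rw [pow_succ', ContinuousLinearMap.mul_apply, ih, hRs]
  have hs0 : s = 0 := by
    have h2 : ⟪s, s⟫ = 0 := by
      nth_rewrite 1 [hs]
      rw [sum_inner]
      refine Finset.sum_eq_zero fun k _ => ?_
      calc ⟪(R ^ k) y, s⟫ = ⟪(R ^ k) y, (R ^ k) s⟫ := by rw [hRks]
        _ = ⟪y, s⟫ := hRk k y s
        _ = 0 := hys
    exact inner_self_eq_zero.1 h2
  -- main computation
  set T : X := ∑ k ∈ Finset.range n, ((n - k : ℕ) : ℝ) • (R ^ k) y with hT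
  have hT1 : T = ∑ k ∈ Finset.range (n + 1), ((n - k : ℕ) : ℝ) • (R ^ k) y := by
    rw [Finset.sum_range_succ, Nat.sub_self, Nat.cast_zero, zero_smul, add_zero]
  have hRT : R T = (∑ k ∈ Finset.range (n + 1), ((n + 1 - k : ℕ) : ℝ) • (R ^ k) y)
      - ((n + 1 : ℕ) : ℝ) • y := by
    have h2 : R T = ∑ k ∈ Finset.range n, ((n + 1 - (k + 1) : ℕ) : ℝ) • (R ^ (k + 1)) y := by
      rw [hT, map_sum]
      refine Finset.sum_congr rfl fun k _ => ?_
      rw [map_smul, pow_succ', Nat.succ_sub_succ]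
      rfl
    rw [h2, Finset.sum_range_succ' (fun k => ((n + 1 - k : ℕ) : ℝ) • (R ^ k) y) n]
    simp
  have hdiff : (∑ k ∈ Finset.range (n + 1), ((n - k : ℕ) : ℝ) • (R ^ k) y)
      - (∑ k ∈ Finset.range (n + 1), ((n + 1 - k : ℕ) : ℝ) • (R ^ k) y) = -s := by
    rw [hs, ← Finset.sum_sub_distrib, ← Finset.sum_neg_distrib]
    refine Finset.sum_congr rfl fun k hk => ?_
    have hk' : k < n + 1 := Finset.mem_range.1 hk
    rw [← sub_smul]
    have hc : ((n - k : ℕ) : ℝ) - ((n + 1 - k : ℕ) : ℝ) = -1 := by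
      rcases Nat.lt_or_ge k n with h | h
      · rw [Nat.cast_sub (by omega), Nat.cast_sub (by omega)]; push_cast; ring
      · have hkn : k = n := by omega
        subst hkn; simp
    rw [hc, neg_one_smul]
  have key : T - R T = ((n + 1 : ℕ) : ℝ) • y - s := by
    rw [hRT, hT1]
    have h3 : (∑ k ∈ Finset.range (n + 1), ((n - k : ℕ) : ℝ) • (R ^ k) y)
        - ((∑ k ∈ Finset.range (n + 1), ((n + 1 - k : ℕ) : ℝ) • (R ^ k) y)
          - ((n + 1 : ℕ) : ℝ) • y)
        = ((∑ k ∈ Finset.range (n + 1), ((n - k : ℕ) : ℝ) • (R ^ k) y)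
          - (∑ k ∈ Finset.range (n + 1), ((n + 1 - k : ℕ) : ℝ) • (R ^ k) y))
          + ((n + 1 : ℕ) : ℝ) • y := by abel
    rw [h3, hdiff]
    abel
  have hmne : ((n + 1 : ℕ) : ℝ) ≠ 0 := by positivity
  rw [ContinuousLinearMap.sub_apply, ContinuousLinearMap.one_apply, map_smul, ← smul_sub,
    key, hs0, sub_zero, smul_smul, inv_mul_cancel₀ hmne, one_smul]
end

section
/- With R a linear isometry of order m, M = Id − R, and T = (1/(2m)) Σ_{k=1}^{m−1} (m−2k) R^k: for every x ∈ X, M(2T(x − Rx)) = x − R^2 x. -/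
lemma geom_aux {A : Type*} [Ring A] [Algebra ℝ A] (r : A) (a : ℝ) (n : ℕ) :
    (1 - r) * (∑ k ∈ Finset.range n, ((a : ℝ) - 2 * k) • r ^ k) * (1 - r)
      = (a + 2) • ((1 : A) - r) - (a - 2 * n + 2) • (r ^ n - r ^ (n + 1))
        - (2 : ℝ) • ((1 : A) - r ^ n) := by
  induction n with
  | zero => simp
  | succ n ih =>
    rw [Finset.sum_range_succ, mul_add, add_mul, ih]
    push_cast
    simp only [mul_sub, sub_mul, mul_smul_comm, smul_mul_assoc, one_mul, mul_one,
      ← pow_succ, ← pow_succ']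
    module

lemma geom_aux2 {A : Type*} [Ring A] [Algebra ℝ A] (r : A) (m : ℕ) (hm : 2 ≤ m)
    (hr : r ^ m = 1) :
    (1 - r) * (∑ k ∈ Finset.Ico 1 m, ((m : ℝ) - 2 * k) • r ^ k) * (1 - r)
      = (m : ℝ) • ((1 : A) - r ^ 2) := by
  have h0 : ∑ k ∈ Finset.range m, ((m : ℝ) - 2 * k) • r ^ k
      = (m : ℝ) • (1 : A) + ∑ k ∈ Finset.Ico 1 m, ((m : ℝ) - 2 * k) • r ^ k := by
    rw [Finset.range_eq_Ico, Finset.sum_eq_sum_Ico_succ_bot (by omega)]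
    simp
  have key := geom_aux r (m : ℝ) m
  rw [h0, hr, pow_succ, hr, one_mul] at key
  rw [mul_add, add_mul] at key
  rw [show (1 - r) * ((m : ℝ) • (1 : A)) * (1 - r)
      = (m : ℝ) • ((1:A) - r - r + r^2) by
    simp only [mul_smul_comm, smul_mul_assoc, mul_one]
    congr 1; noncomm_ring] at key
  linear_combination (norm := module) key

/-- For every `x`, `M(2T(x − Rx)) = x − R²x`, where `M = Id − R` and
`T = (1/(2m)) Σ_{k=1}^{m−1} (m−2k) R^k`. -/
theorem M_two_T_identity
    {X : Type*} [NormedAddCommGroup X] [InnerProductSpace ℝ X] [CompleteSpace X]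
    (m : ℕ) (hm : 2 ≤ m) (R : X →L[ℝ] X) (hR : ∀ x, ‖R x‖ = ‖x‖) (hRm : R ^ m = 1) :
    ∀ x : X,
      ((1 : X →L[ℝ] X) - R)
        ((2 : ℝ) •
          ((2 * (m : ℝ))⁻¹ • ∑ k ∈ Finset.Ico 1 m, ((m : ℝ) - 2 * k) • R ^ k)
            (x - R x)) = x - (R ^ 2) x := by
  intro x
  set S : X →L[ℝ] X := ∑ k ∈ Finset.Ico 1 m, ((m : ℝ) - 2 * k) • R ^ k with hS
  have key := geom_aux2 R m hm hRm
  have h1 : ((1 : X →L[ℝ] X) - R) ((2 : ℝ) • ((2 * (m : ℝ))⁻¹ • S) (x - R x))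
      = (2 : ℝ) • (2 * (m : ℝ))⁻¹ • (((1 - R) * S * (1 - R)) x) := by
    simp [ContinuousLinearMap.mul_apply, map_smul]
  rw [h1, key]
  have hm0 : (m : ℝ) ≠ 0 := by
    have : (0 : ℝ) < m := by exact_mod_cast (by omega : 0 < m)
    exact ne_of_gt this
  rw [ContinuousLinearMap.smul_apply, smul_smul, smul_smul,
    show (2 : ℝ) * (2 * (m : ℝ))⁻¹ * (m : ℝ) = 1 by field_simp, one_smul]
  simp
end

section
/- With R a linear isometry of order m, M = Id − R, D = Fix R, and T = (1/(2m)) Σ_{k=1}^{m−1} (m−2k) R^k: the set-valued inverse of M satisfies M^{-1} = (1/2) Id + T + N_{D^⊥}; that is, for y ∈ D^⊥, the solution set {x : Mx = y} equals {(1/2)y + Ty + d : d ∈ D}, and M^{-1}y = ∅ for y ∉ D^⊥. -/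
open Finset RealInnerProductSpace

private lemma tele_aux' {V : Type*} [AddCommGroup V] [Module ℝ V] (m : ℕ) (hm : 2 ≤ m)
    (v : ℕ → V) (hvm : v m = v 0) :
    ∑ k ∈ Finset.Ico 1 m, ((m : ℝ) - 2 * k) • (v k - v (k+1)) =
      (m : ℝ) • v 0 + (m : ℝ) • v 1 - (2:ℝ) • ∑ k ∈ Finset.range m, v k := by
  obtain ⟨n, rfl⟩ : ∃ n, m = n + 2 := ⟨m - 2, by omega⟩
  set M : ℝ := ((n : ℝ) + 2) with hM
  have h1 : ∀ k : ℕ, (M - 2 * (k:ℝ)) • (v k - v (k+1)) =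
      ((M - 2*(k:ℝ)) • v k - (M - 2*((k:ℝ)+1)) • v (k+1)) - (2:ℝ) • v (k+1) := by
    intro k; module
  have htel : ∑ k ∈ Finset.Ico 1 (n+2), ((M - 2*(k:ℝ)) • v k - (M - 2*((k:ℝ)+1)) • v (k+1))
      = (M - 2) • v 1 - (M - 2*((n:ℝ)+2)) • v (n+2) := by
    rw [Finset.sum_Ico_eq_sum_range]
    have hidx : n + 2 - 1 = n + 1 := rfl
    rw [hidx]
    have key := Finset.sum_range_sub' (fun i : ℕ => (M - 2*((i:ℝ)+1)) • v (i+1)) (n+1)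
    rw [show (∑ i ∈ Finset.range (n+1),
        ((M - 2*((1+i : ℕ):ℝ)) • v (1+i) - (M - 2*(((1+i : ℕ):ℝ)+1)) • v (1+i+1)))
        = ∑ i ∈ Finset.range (n+1),
          ((fun j : ℕ => (M - 2*((j:ℝ)+1)) • v (j+1)) i
            - (fun j : ℕ => (M - 2*((j:ℝ)+1)) • v (j+1)) (i+1)) from
      Finset.sum_congr rfl fun k _ => by rw [Nat.add_comm 1 k]; push_cast; module]
    rw [key]
    simp only [show n+1+1 = n+2 from rfl]
    push_cast
    norm_num
    module
  have hsum : ∑ k ∈ Finset.Ico 1 (n+2), v (k+1) = (∑ k ∈ Finset.range (n+2), v k) - v 1 := by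
    rw [Finset.sum_Ico_eq_sum_range]
    have hidx : n + 2 - 1 = n + 1 := rfl
    rw [hidx]
    have e1 := Finset.sum_range_succ' (fun k => v k) (n+1)
    have e2 := Finset.sum_range_succ' (fun k => v (k+1)) n
    have e3 := Finset.sum_range_succ (fun k => v (k+2)) n
    have h4 : ∑ i ∈ Finset.range (n + 1), v (1 + i + 1) = ∑ i ∈ Finset.range (n+1), v (i+2) := by
      refine Finset.sum_congr rfl fun k _ => by rw [Nat.add_comm 1 k]
    rw [h4, e3, e1, e2, hvm]
    abel
  calc ∑ k ∈ Finset.Ico 1 (n+2), (((n+2 : ℕ) : ℝ) - 2 * k) • (v k - v (k+1))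
      = ∑ k ∈ Finset.Ico 1 (n+2), (((M - 2*(k:ℝ)) • v k - (M - 2*((k:ℝ)+1)) • v (k+1)) - (2:ℝ) • v (k+1)) := by
        refine Finset.sum_congr rfl fun k _ => ?_
        push_cast
        rw [h1 k]
    _ = ((M - 2) • v 1 - (M - 2*((n:ℝ)+2)) • v (n+2)) - (2:ℝ) • ((∑ k ∈ Finset.range (n+2), v k) - v 1) := by
        rw [Finset.sum_sub_distrib, htel, ← Finset.smul_sum, hsum]
    _ = (((n+2:ℕ) : ℝ)) • v 0 + (((n+2:ℕ)):ℝ) • v 1 - (2:ℝ) • ∑ k ∈ Finset.range (n+2), v k := by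
        rw [hvm]
        push_cast
        module

/-- The set-valued inverse of `M = Id − R` satisfies `M⁻¹ = (1/2)Id + T + N_{Dᗮ}`:
for `y ∈ Dᗮ`, `{x : Mx = y} = (1/2)y + Ty + D`, and `{x : Mx = y} = ∅` for `y ∉ Dᗮ`. -/
theorem set_valued_inverse_displacement
    {X : Type*} [NormedAddCommGroup X] [InnerProductSpace ℝ X] [CompleteSpace X]
    (m : ℕ) (hm : 2 ≤ m) (R : X →L[ℝ] X) (hR : ∀ x, ‖R x‖ = ‖x‖) (hRm : R ^ m = 1)
    (D : Submodule ℝ X) (hD : ∀ x, x ∈ D ↔ R x = x) :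
    ∀ y : X,
      (y ∈ Dᗮ →
        {x : X | ((1 : X →L[ℝ] X) - R) x = y} =
          {x : X | ∃ d ∈ D,
            x = (1 / 2 : ℝ) • y +
              ((2 * (m : ℝ))⁻¹ • ∑ k ∈ Finset.Ico 1 m, ((m : ℝ) - 2 * k) • R ^ k) y + d}) ∧
      (y ∉ Dᗮ → {x : X | ((1 : X →L[ℝ] X) - R) x = y} = ∅) := by
  have hinner : ∀ a b : X, ⟪R a, R b⟫ = ⟪a, b⟫ := fun a b =>
    (LinearIsometry.mk R.toLinearMap hR).inner_map_map a b
  have hm0 : (m : ℝ) ≠ 0 := by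
    have : 0 < m := by omega
    exact_mod_cast this.ne'
  have hfix : ∀ x, R x = x → ∀ k : ℕ, (R ^ k) x = x := by
    intro x hx k
    induction k with
    | zero => simp
    | succ n ih => rw [pow_succ, ContinuousLinearMap.mul_apply, hx, ih]
  have hik : ∀ (j : ℕ) (a b : X), ⟪(R ^ j) a, (R ^ j) b⟫ = ⟪a, b⟫ := by
    intro j
    induction j with
    | zero => simp
    | succ n ih =>
      intro a b
      simp only [pow_succ, ContinuousLinearMap.mul_apply]
      rw [ih (R a) (R b), hinner]
  intro y
  constructor
  · -- y ∈ Dᗮ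
    intro hy
    have hRmy : (R ^ m) y = y := by rw [hRm]; rfl
    have hRS : R (∑ k ∈ Finset.range m, (R ^ k) y) = ∑ k ∈ Finset.range m, (R ^ k) y := by
      have e0 : R (∑ k ∈ Finset.range m, (R ^ k) y) = ∑ k ∈ Finset.range m, (R ^ (k+1)) y := by
        rw [map_sum]
        exact Finset.sum_congr rfl fun k _ => by
          rw [pow_succ', ContinuousLinearMap.mul_apply]
      have e1 := Finset.sum_range_succ' (fun k => (R ^ k) y) m
      have e2 := Finset.sum_range_succ (fun k => (R ^ k) y) m
      simp only [pow_zero, ContinuousLinearMap.one_apply] at e1 e2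
      rw [e0]
      have e4 : ∑ k ∈ Finset.range m, (R ^ (k+1)) y
          = (∑ k ∈ Finset.range m, (R ^ k) y) + (R ^ m) y - y := by
        rw [← e2, e1]; abel
      rw [e4, hRmy]; abel
    have hSD : (∑ k ∈ Finset.range m, (R ^ k) y) ∈ D := (hD _).mpr hRS
    have hS0 : ∑ k ∈ Finset.range m, (R ^ k) y = 0 := by
      have hfixS := hfix _ hRS
      have h2 : ∀ k ∈ Finset.range m,
          ⟪(R ^ k) y, ∑ k ∈ Finset.range m, (R ^ k) y⟫ = (0:ℝ) := by
        intro k _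
        calc ⟪(R ^ k) y, ∑ k ∈ Finset.range m, (R ^ k) y⟫
            = ⟪(R ^ k) y, (R ^ k) (∑ k ∈ Finset.range m, (R ^ k) y)⟫ := by rw [hfixS k]
          _ = ⟪y, ∑ k ∈ Finset.range m, (R ^ k) y⟫ := hik k y _
          _ = 0 := by rw [real_inner_comm]; exact hy _ hSD
      have h3 : ⟪(∑ k ∈ Finset.range m, (R ^ k) y : X), ∑ k ∈ Finset.range m, (R ^ k) y⟫ = (0:ℝ) := by
        rw [sum_inner]
        exact Finset.sum_eq_zero h2
      exact inner_self_eq_zero.mp h3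
    -- the telescoping identity applied to v k = R^k y
    have htele := tele_aux' m hm (fun k => (R ^ k) y) (by simpa using hRmy)
    simp only [pow_zero, ContinuousLinearMap.one_apply, pow_one] at htele
    rw [hS0] at htele
    have happ : ((2 * (m : ℝ))⁻¹ • ∑ k ∈ Finset.Ico 1 m, ((m : ℝ) - 2 * k) • R ^ k) y
        = (2*(m:ℝ))⁻¹ • ∑ k ∈ Finset.Ico 1 m, ((m:ℝ) - 2*(k:ℝ)) • (R ^ k) y := by
      simp [ContinuousLinearMap.smul_apply, ContinuousLinearMap.sum_apply]
    set x₀ : X := (1/2:ℝ) • y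
        + (2*(m:ℝ))⁻¹ • ∑ k ∈ Finset.Ico 1 m, ((m:ℝ) - 2*(k:ℝ)) • (R ^ k) y with hx₀
    have hMx₀ : x₀ - R x₀ = y := by
      have hsum : R (∑ k ∈ Finset.Ico 1 m, ((m:ℝ) - 2*(k:ℝ)) • (R ^ k) y)
          = ∑ k ∈ Finset.Ico 1 m, ((m:ℝ) - 2*(k:ℝ)) • (R ^ (k+1)) y := by
        rw [map_sum]
        refine Finset.sum_congr rfl fun k _ => ?_
        rw [map_smul, pow_succ', ContinuousLinearMap.mul_apply]
      have hdiff : (∑ k ∈ Finset.Ico 1 m, ((m:ℝ) - 2*(k:ℝ)) • (R ^ k) y)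
            - ∑ k ∈ Finset.Ico 1 m, ((m:ℝ) - 2*(k:ℝ)) • (R ^ (k+1)) y
          = ∑ k ∈ Finset.Ico 1 m, ((m:ℝ) - 2*(k:ℝ)) • ((R ^ k) y - (R ^ (k+1)) y) := by
        rw [← Finset.sum_sub_distrib]
        exact Finset.sum_congr rfl fun k _ => (smul_sub _ _ _).symm
      rw [hx₀, map_add, map_smul, map_smul, hsum]
      have hre : (1/2:ℝ) • y + (2*(m:ℝ))⁻¹ • (∑ k ∈ Finset.Ico 1 m, ((m:ℝ) - 2*(k:ℝ)) • (R ^ k) y)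
            - ((1/2:ℝ) • R y + (2*(m:ℝ))⁻¹ • ∑ k ∈ Finset.Ico 1 m, ((m:ℝ) - 2*(k:ℝ)) • (R ^ (k+1)) y)
          = (1/2:ℝ) • y - (1/2:ℝ) • R y
            + (2*(m:ℝ))⁻¹ • ((∑ k ∈ Finset.Ico 1 m, ((m:ℝ) - 2*(k:ℝ)) • (R ^ k) y)
              - ∑ k ∈ Finset.Ico 1 m, ((m:ℝ) - 2*(k:ℝ)) • (R ^ (k+1)) y) := by
        rw [smul_sub]; abel
      rw [hre, hdiff, htele]
      match_scalars <;> field_simp <;> ring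
    ext x
    simp only [Set.mem_setOf_eq, ContinuousLinearMap.sub_apply,
      ContinuousLinearMap.one_apply, happ]
    constructor
    · intro hx
      refine ⟨x - x₀, ?_, by rw [hx₀]; abel⟩
      rw [hD]
      have h6 : R x = x - y := by rw [← hx]; abel
      have h7 : R x₀ = x₀ - y := by rw [← hMx₀]; abel
      rw [map_sub, h6, h7]; abel
    · rintro ⟨d, hd, rfl⟩
      have hRd : R d = d := (hD d).mp hd
      have hfold : (1/2:ℝ) • y + (2*(m:ℝ))⁻¹ • (∑ k ∈ Finset.Ico 1 m, ((m:ℝ) - 2*(k:ℝ)) • (R ^ k) y) + d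
          = x₀ + d := by rw [hx₀]
      rw [hfold, map_add, hRd]
      calc x₀ + d - (R x₀ + d) = x₀ - R x₀ := by abel
        _ = y := hMx₀
  · -- y ∉ Dᗮ
    intro hy
    rw [Set.eq_empty_iff_forall_notMem]
    intro x hx
    simp only [Set.mem_setOf_eq, ContinuousLinearMap.sub_apply,
      ContinuousLinearMap.one_apply] at hx
    apply hy
    rw [Submodule.mem_orthogonal]
    intro u hu
    have hu' : R u = u := (hD u).mp hu
    have h8 : ⟪u, x⟫ = ⟪u, R x⟫ := by
      conv_lhs => rw [← hinner u x, hu']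
    rw [← hx]
    simp [inner_sub_right, ← h8]
end

section
/- The Moore-Penrose inverse of M = Id − R equals Σ_{k=0}^{m−1} ((m−1−2k)/(2m)) R^k; equivalently M^† = (1/2) P_{D^⊥}(Id + 2T). -/
noncomputable def mpCoeff (m k : ℕ) : ℝ := ((m : ℝ) - 1 - 2 * k) / (2 * m)

lemma sum_range_cast_real (n : ℕ) :
    ∑ k ∈ Finset.range n, (k : ℝ) = n * (n - 1) / 2 := by
  induction n with
  | zero => simp
  | succ n ih =>
    rw [Finset.sum_range_succ, ih]
    push_cast
    ring

set_option maxHeartbeats 1000000 in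
set_option synthInstance.maxHeartbeats 200000 in
/-- The Moore-Penrose inverse of `M = Id − R` equals
`G = Σ_{k=0}^{m−1} ((m−1−2k)/(2m)) R^k` (characterized by the four Penrose equations);
equivalently `M† = (1/2) P_{Dᗮ}(Id + 2T)`. -/
theorem moore_penrose_inverse_displacement
    {X : Type*} [NormedAddCommGroup X] [InnerProductSpace ℝ X] [CompleteSpace X]
    (m : ℕ) (hm : 2 ≤ m) (R : X →L[ℝ] X) (hR : ∀ x, ‖R x‖ = ‖x‖) (hRm : R ^ m = 1)
    (M G : X →L[ℝ] X) (hM : M = 1 - R)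
    (hG : G = ∑ k ∈ Finset.range m, (((m : ℝ) - 1 - 2 * k) / (2 * m)) • R ^ k) :
    M * G * M = M ∧ G * M * G = G ∧
    ContinuousLinearMap.adjoint (M * G) = M * G ∧
    ContinuousLinearMap.adjoint (G * M) = G * M ∧
    G = (1 / 2 : ℝ) •
        ((1 - (m : ℝ)⁻¹ • ∑ k ∈ Finset.range m, R ^ k) *
          (1 + (2 : ℝ) •
            ((2 * (m : ℝ))⁻¹ • ∑ k ∈ Finset.Ico 1 m, ((m : ℝ) - 2 * k) • R ^ k))) := by
  obtain ⟨n, rfl⟩ : ∃ n, m = n + 1 := ⟨m - 1, by omega⟩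
  have hn1 : 1 ≤ n := by omega
  have hm0 : ((n + 1 : ℕ) : ℝ) ≠ 0 := by positivity
  have hG' : G = ∑ k ∈ Finset.range (n + 1), mpCoeff (n + 1) k • R ^ k := by
    rw [hG]; rfl
  set S : X →L[ℝ] X := ∑ k ∈ Finset.range (n + 1), R ^ k with hSdef
  -- basic multiplicative identities for S
  have hSM : S * (1 - R) = 0 := by
    have h := geom_sum_mul R (n + 1)
    rw [hRm, sub_self] at h
    calc S * (1 - R) = -(S * (R - 1)) := by
          rw [mul_sub, mul_sub, mul_one, neg_sub]
      _ = 0 := by rw [hSdef, h, neg_zero]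
  have hMS : (1 - R) * S = 0 := by
    have h := mul_geom_sum R (n + 1)
    rw [hRm, sub_self] at h
    calc (1 - R) * S = -((R - 1) * S) := by
          rw [sub_mul, sub_mul, one_mul, neg_sub]
      _ = 0 := by rw [hSdef, h, neg_zero]
  have hSR : S * R = S := by
    have h : S * (1 - R) = S - S * R := by rw [mul_sub, mul_one]
    rw [hSM] at h
    exact (sub_eq_zero.mp h.symm).symm
  have hRS : R * S = S := by
    have h : (1 - R) * S = S - R * S := by rw [sub_mul, one_mul]
    rw [hMS] at h
    exact (sub_eq_zero.mp h.symm).symm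
  have hSRk : ∀ k : ℕ, S * R ^ k = S := by
    intro k
    induction k with
    | zero => simp
    | succ k ih => rw [pow_succ, ← mul_assoc, ih, hSR]
  have hSS : S * S = ((n + 1 : ℕ) : ℝ) • S := by
    nth_rewrite 2 [hSdef]
    rw [Finset.mul_sum]
    simp_rw [hSRk]
    rw [Finset.sum_const, Finset.card_range, Nat.cast_smul_eq_nsmul]
  -- star / adjoint facts
  have hstarR : star R * R = 1 := by
    ext x
    apply ext_inner_right ℝ
    intro y
    simp only [ContinuousLinearMap.mul_apply, ContinuousLinearMap.one_apply]
    rw [ContinuousLinearMap.star_eq_adjoint, ContinuousLinearMap.adjoint_inner_left]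
    exact LinearIsometry.inner_map_map ⟨R.toLinearMap, hR⟩ x y
  have hstarRS : star R * S = S := by
    nth_rewrite 1 [← hRS]
    rw [← mul_assoc, hstarR, one_mul]
  have hstarSR : star S * R = star S := by
    have h := congrArg star hstarRS
    simpa [star_mul, star_star] using h
  have hstarSRk : ∀ k : ℕ, star S * R ^ k = star S := by
    intro k
    induction k with
    | zero => simp
    | succ k ih => rw [pow_succ, ← mul_assoc, ih, hstarSR]
  have hstarSS : star S * S = ((n + 1 : ℕ) : ℝ) • star S := by
    rw [show star S * S = star S * ∑ k ∈ Finset.range (n + 1), R ^ k from rfl]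
    rw [Finset.mul_sum]
    simp_rw [hstarSRk]
    rw [Finset.sum_const, Finset.card_range, Nat.cast_smul_eq_nsmul]
  have hSstar : star S = S := by
    have h1 : star (star S * S) = star S * S := by
      rw [star_mul, star_star]
    rw [hstarSS] at h1
    have h2 : ((n + 1 : ℕ) : ℝ) • S = ((n + 1 : ℕ) : ℝ) • star S := by
      simpa [star_smul, star_star] using h1
    exact (smul_right_injective (X →L[ℝ] X) hm0 h2).symm
  -- split sums at the bottom
  have hSsplit : S = 1 + ∑ j ∈ Finset.Ico 1 (n + 1), R ^ j := by
    rw [hSdef, Finset.range_eq_Ico, Finset.sum_eq_sum_Ico_succ_bot (by omega)]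
    simp
  have hGsplit : G = mpCoeff (n + 1) 0 • (1 : X →L[ℝ] X)
      + ∑ j ∈ Finset.Ico 1 (n + 1), mpCoeff (n + 1) j • R ^ j := by
    rw [hG', Finset.range_eq_Ico, Finset.sum_eq_sum_Ico_succ_bot (by omega)]
    simp
  have hRG : R * G = mpCoeff (n + 1) n • (1 : X →L[ℝ] X)
      + ∑ j ∈ Finset.Ico 1 (n + 1), mpCoeff (n + 1) (j - 1) • R ^ j := by
    rw [hG', Finset.mul_sum]
    simp_rw [mul_smul_comm, ← pow_succ']
    rw [Finset.sum_range_succ, hRm]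
    rw [Finset.sum_Ico_eq_sum_range]
    simp only [Nat.add_sub_cancel, Nat.add_sub_cancel_left]
    rw [add_comm]
    congr 1
    apply Finset.sum_congr rfl
    intro k _
    rw [add_comm 1 k]
  -- the key product formula : (1 - R) * G = P
  have hMG : (1 - R) * G = 1 - ((n + 1 : ℕ) : ℝ)⁻¹ • S := by
    rw [sub_mul, one_mul, hRG]
    nth_rewrite 1 [hGsplit]
    rw [hSsplit, smul_add, Finset.smul_sum]
    have hAB : (∑ j ∈ Finset.Ico 1 (n + 1), mpCoeff (n + 1) j • R ^ j)
        - (∑ j ∈ Finset.Ico 1 (n + 1), mpCoeff (n + 1) (j - 1) • R ^ j)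
        = ∑ j ∈ Finset.Ico 1 (n + 1), (mpCoeff (n + 1) j - mpCoeff (n + 1) (j - 1)) • R ^ j := by
      rw [← Finset.sum_sub_distrib]
      exact Finset.sum_congr rfl fun j _ => (sub_smul _ _ _).symm
    have step1 : mpCoeff (n + 1) 0 • (1 : X →L[ℝ] X)
        + (∑ j ∈ Finset.Ico 1 (n + 1), mpCoeff (n + 1) j • R ^ j)
        - (mpCoeff (n + 1) n • (1 : X →L[ℝ] X)
          + ∑ j ∈ Finset.Ico 1 (n + 1), mpCoeff (n + 1) (j - 1) • R ^ j)
        = (mpCoeff (n + 1) 0 - mpCoeff (n + 1) n) • (1 : X →L[ℝ] X)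
          + ∑ j ∈ Finset.Ico 1 (n + 1), (mpCoeff (n + 1) j - mpCoeff (n + 1) (j - 1)) • R ^ j := by
      rw [← hAB, sub_smul]
      abel
    rw [step1]
    have hc0 : mpCoeff (n + 1) 0 - mpCoeff (n + 1) n = 1 - ((n + 1 : ℕ) : ℝ)⁻¹ := by
      simp only [mpCoeff]
      push_cast
      have : ((n : ℝ) + 1) ≠ 0 := by positivity
      field_simp
      ring
    have hcj : ∀ j ∈ Finset.Ico 1 (n + 1),
        mpCoeff (n + 1) j - mpCoeff (n + 1) (j - 1) = -((n + 1 : ℕ) : ℝ)⁻¹ := by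
      intro j hj
      simp only [Finset.mem_Ico] at hj
      simp only [mpCoeff]
      have hcast : ((j - 1 : ℕ) : ℝ) = (j : ℝ) - 1 := by
        have : 1 ≤ j := hj.1
        push_cast [this]
        ring
      rw [hcast]
      push_cast
      have : ((n : ℝ) + 1) ≠ 0 := by positivity
      field_simp
      ring
    rw [hc0]
    have hsum2 : ∑ j ∈ Finset.Ico 1 (n + 1),
          (mpCoeff (n + 1) j - mpCoeff (n + 1) (j - 1)) • R ^ j
        = ∑ j ∈ Finset.Ico 1 (n + 1), -(((n + 1 : ℕ) : ℝ)⁻¹ • R ^ j) := by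
      apply Finset.sum_congr rfl
      intro j hj
      rw [hcj j hj, neg_smul]
    rw [hsum2, Finset.sum_neg_distrib, sub_smul, one_smul]
    abel
  -- commutation
  have hcommRG : Commute R G := by
    rw [hG']
    exact Commute.sum_right _ _ _ fun k _ => ((Commute.refl R).pow_right k).smul_right _
  have hGM : G * (1 - R) = (1 - R) * G := by
    rw [mul_sub, sub_mul, mul_one, one_mul, hcommRG.eq]
  -- P kills M on the right, and G,S on relevant sides
  have hPM : (1 - ((n + 1 : ℕ) : ℝ)⁻¹ • S) * (1 - R) = 1 - R := by
    rw [sub_mul, one_mul, smul_mul_assoc, hSM, smul_zero, sub_zero]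
  have hsum_c : ∑ k ∈ Finset.range (n + 1), mpCoeff (n + 1) k = 0 := by
    simp only [mpCoeff]
    rw [← Finset.sum_div]
    have h : ∑ k ∈ Finset.range (n + 1), (((n + 1 : ℕ) : ℝ) - 1 - 2 * k) = 0 := by
      have g := sum_range_cast_real (n + 1)
      simp only [Finset.sum_sub_distrib, Finset.sum_const, Finset.card_range,
        nsmul_eq_mul, ← Finset.mul_sum]
      rw [g]
      push_cast
      ring
    rw [h, zero_div]
  have hSG : S * G = 0 := by
    rw [hG', Finset.mul_sum]
    simp_rw [mul_smul_comm, hSRk]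
    rw [← Finset.sum_smul, hsum_c, zero_smul]
  have hPG : (1 - ((n + 1 : ℕ) : ℝ)⁻¹ • S) * G = G := by
    rw [sub_mul, one_mul, smul_mul_assoc, hSG, smul_zero, sub_zero]
  have hPS : (1 - ((n + 1 : ℕ) : ℝ)⁻¹ • S) * S = 0 := by
    rw [sub_mul, one_mul, smul_mul_assoc, hSS, smul_smul,
      inv_mul_cancel₀ hm0, one_smul, sub_self]
  have hPstar : star (1 - ((n + 1 : ℕ) : ℝ)⁻¹ • S) = 1 - ((n + 1 : ℕ) : ℝ)⁻¹ • S := by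
    rw [star_sub, star_one, star_smul, hSstar, star_trivial]
  refine ⟨?_, ?_, ?_, ?_, ?_⟩
  · rw [hM, hMG, hPM]
  · rw [hM, hGM, hMG, hPG]
  · rw [hM, hMG, ← ContinuousLinearMap.star_eq_adjoint, hPstar]
  · rw [hM, hGM, hMG, ← ContinuousLinearMap.star_eq_adjoint, hPstar]
  · -- the displacement formula
    have hQ : (2 : ℝ) • ((2 * ((n + 1 : ℕ) : ℝ))⁻¹ •
          ∑ k ∈ Finset.Ico 1 (n + 1), (((n + 1 : ℕ) : ℝ) - 2 * k) • R ^ k)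
        = ((n + 1 : ℕ) : ℝ)⁻¹ •
          ∑ k ∈ Finset.Ico 1 (n + 1), (((n + 1 : ℕ) : ℝ) - 2 * k) • R ^ k := by
      rw [smul_smul]
      congr 1
      rw [mul_inv]
      rw [← mul_assoc]
      norm_num
    have hQG : (1 : X →L[ℝ] X) + ((n + 1 : ℕ) : ℝ)⁻¹ •
          ∑ k ∈ Finset.Ico 1 (n + 1), (((n + 1 : ℕ) : ℝ) - 2 * k) • R ^ k
        = (2 : ℝ) • G + ((n + 1 : ℕ) : ℝ)⁻¹ • S := by
      rw [hG', hSdef, Finset.smul_sum, Finset.smul_sum, Finset.smul_sum,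
        ← Finset.sum_add_distrib]
      rw [Finset.range_eq_Ico, Finset.sum_eq_sum_Ico_succ_bot (by omega : 0 < n + 1)]
      congr 1
      · rw [pow_zero, smul_smul, ← add_smul]
        have hone : 2 * mpCoeff (n + 1) 0 + ((n + 1 : ℕ) : ℝ)⁻¹ = 1 := by
          have h0 : ((n : ℝ) + 1) ≠ 0 := by positivity
          simp only [mpCoeff]
          push_cast
          field_simp
          ring
        rw [hone, one_smul]
      · apply Finset.sum_congr rfl
        intro j hj
        rw [smul_smul, smul_smul, ← add_smul]
        congr 1
        simp only [mpCoeff]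
        have h0 : ((n : ℝ) + 1) ≠ 0 := by positivity
        push_cast
        field_simp
        ring
    rw [hQ, hQG, mul_add, mul_smul_comm, mul_smul_comm, hPG, hPS, smul_zero, add_zero,
      smul_smul]
    norm_num
end

section
/- The operator G := Σ_{k=0}^{m−1} ((m−1−2k)/(2m)) R^k satisfies M G = P_{D^⊥}, where M = Id − R and P_{D^⊥} = Id − (1/m) Σ_{k=0}^{m−1} R^k. -/
/-- `M G = P_{Dᗮ}` where `G = Σ_{k=0}^{m−1} ((m−1−2k)/(2m)) R^k`, `M = Id − R`,
and `P_{Dᗮ} = Id − (1/m) Σ_{k=0}^{m−1} R^k`. -/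
theorem M_comp_G_eq_projection
    {X : Type*} [NormedAddCommGroup X] [InnerProductSpace ℝ X] [CompleteSpace X]
    (m : ℕ) (hm : 2 ≤ m) (R : X →L[ℝ] X) (hR : ∀ x, ‖R x‖ = ‖x‖) (hRm : R ^ m = 1) :
    (1 - R) * (∑ k ∈ Finset.range m, (((m : ℝ) - 1 - 2 * k) / (2 * m)) • R ^ k) =
      1 - (m : ℝ)⁻¹ • ∑ k ∈ Finset.range m, R ^ k := by
  obtain ⟨n, rfl⟩ : ∃ n, m = n + 1 := ⟨m - 1, by omega⟩
  set c : ℕ → ℝ := fun k => (((n + 1 : ℕ) : ℝ) - 1 - 2 * k) / (2 * ((n + 1 : ℕ) : ℝ)) with hc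
  have hm0 : ((n : ℝ) + 1) ≠ 0 := by positivity
  have hstep : ∀ i : ℕ, c (i + 1) = c i - (((n + 1 : ℕ) : ℝ))⁻¹ := by
    intro i; simp only [hc]; push_cast; field_simp; ring
  have h0 : c 0 - c n = 1 - (((n + 1 : ℕ) : ℝ))⁻¹ := by
    simp only [hc]; push_cast; field_simp; ring
  rw [sub_mul, one_mul, Finset.mul_sum]
  simp_rw [mul_smul_comm, ← pow_succ']
  rw [Finset.sum_range_succ' (fun k => c k • R ^ k) n,
      Finset.sum_range_succ (fun k => c k • R ^ (k + 1)) n,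
      Finset.sum_range_succ' (fun k => R ^ k) n, hRm]
  simp only [pow_zero, smul_add, smul_smul]
  rw [add_sub_add_comm, ← Finset.sum_sub_distrib]
  simp_rw [← sub_smul, hstep, sub_sub_cancel_left, h0]
  rw [Finset.smul_sum]
  simp_rw [neg_smul]
  rw [Finset.sum_neg_distrib, sub_smul, one_smul]
  abel
end

section
/- With M = Id − R and M^† = Σ_{k=0}^{m−1} ((m−1−2k)/(2m)) R^k: for every y ∈ D^⊥, the solution set {x : Mx = y} equals {M^† y + d : d ∈ D}. -/
open Finset RealInnerProductSpace

/-- For every `y ∈ Dᗮ`, the solution set `{x : Mx = y}` equals `M† y + D`,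
where `M† = Σ_{k=0}^{m−1} ((m−1−2k)/(2m)) R^k`. -/
theorem solution_set_via_moore_penrose
    {X : Type*} [NormedAddCommGroup X] [InnerProductSpace ℝ X] [CompleteSpace X]
    (m : ℕ) (hm : 2 ≤ m) (R : X →L[ℝ] X) (hR : ∀ x, ‖R x‖ = ‖x‖) (hRm : R ^ m = 1)
    (D : Submodule ℝ X) (hD : ∀ x, x ∈ D ↔ R x = x) :
    ∀ y ∈ Dᗮ,
      {x : X | ((1 : X →L[ℝ] X) - R) x = y} =
        {x : X | ∃ d ∈ D,
          x = (∑ k ∈ Finset.range m, (((m : ℝ) - 1 - 2 * k) / (2 * m)) • R ^ k) y + d} := by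
  intro y hy
  obtain ⟨n, rfl⟩ : ∃ n, m = n + 1 := ⟨m - 1, (Nat.succ_pred_eq_of_pos (by omega)).symm⟩
  have hm0 : ((n : ℝ) + 1) ≠ 0 := by positivity
  -- inner products are preserved
  have hinner : ∀ x z : X, ⟪R x, R z⟫ = ⟪x, z⟫ := by
    intro x z
    exact (LinearIsometry.mk (R : X →ₗ[ℝ] X) hR).inner_map_map x z
  have hinner_pow : ∀ (k : ℕ) (x z : X), ⟪(R ^ k) x, (R ^ k) z⟫ = ⟪x, z⟫ := by
    intro k
    induction k with
    | zero => simp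
    | succ k ih =>
      intro x z
      rw [pow_succ, ContinuousLinearMap.mul_apply, ContinuousLinearMap.mul_apply, ih, hinner]
  have hfix : ∀ d ∈ D, ∀ k : ℕ, (R ^ k) d = d := by
    intro d hd k
    induction k with
    | zero => simp
    | succ k ih => rw [pow_succ, ContinuousLinearMap.mul_apply, (hD d).mp hd, ih]
  have hperp : ∀ k : ℕ, (R ^ k) y ∈ Dᗮ := by
    intro k
    rw [Submodule.mem_orthogonal]
    intro u hu
    calc ⟪u, (R ^ k) y⟫ = ⟪(R ^ k) u, (R ^ k) y⟫ := by rw [hfix u hu k]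
      _ = ⟪u, y⟫ := hinner_pow k u y
      _ = 0 := (Submodule.mem_orthogonal D y).mp hy u hu
  -- the symmetrized sum vanishes
  set s : X := ∑ k ∈ range (n + 1), (R ^ k) y with hsdef
  have hrot : ∑ k ∈ range n, (R ^ (k + 1)) y + y = s := by
    rw [hsdef, Finset.sum_range_succ']
    simp
  have hsD : s ∈ D := by
    rw [hD]
    have : R s = ∑ k ∈ range (n + 1), (R ^ (k + 1)) y := by
      rw [hsdef, map_sum]
      refine Finset.sum_congr rfl fun k _ => ?_
      rw [pow_succ', ContinuousLinearMap.mul_apply]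
    rw [this, Finset.sum_range_succ, hRm]
    simpa using hrot
  have hsperp : s ∈ Dᗮ := Submodule.sum_mem _ fun k _ => hperp k
  have hs : s = 0 := by
    have h0 : ⟪s, s⟫ = 0 := (Submodule.mem_orthogonal D s).mp hsperp s hsD
    exact inner_self_eq_zero.mp h0
  -- coefficients
  set c : ℕ → ℝ := fun k => (((n : ℝ) + 1) - 1 - 2 * k) / (2 * ((n : ℝ) + 1)) with hcdef
  set t : X := ∑ k ∈ range (n + 1), c k • (R ^ k) y with htdef
  have hTy : (∑ k ∈ range (n + 1),
      ((((n + 1 : ℕ) : ℝ) - 1 - 2 * (k : ℝ)) / (2 * ((n + 1 : ℕ) : ℝ))) • R ^ k) y = t := by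
    rw [htdef, ContinuousLinearMap.sum_apply]
    refine Finset.sum_congr rfl fun k _ => ?_
    rw [ContinuousLinearMap.smul_apply, hcdef]
    push_cast
    ring_nf
  -- the key computation
  have hkey : ((1 : X →L[ℝ] X) - R) t = y := by
    have hRt : R t = ∑ k ∈ range (n + 1), c k • (R ^ (k + 1)) y := by
      rw [htdef, map_sum]
      refine Finset.sum_congr rfl fun k _ => ?_
      rw [map_smul, pow_succ', ContinuousLinearMap.mul_apply]
    have ht' : t = ∑ k ∈ range n, c (k + 1) • (R ^ (k + 1)) y + c 0 • y := by
      rw [htdef, Finset.sum_range_succ']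
      simp
    have hRt' : R t = ∑ k ∈ range n, c k • (R ^ (k + 1)) y + c n • y := by
      rw [hRt, Finset.sum_range_succ, hRm]
      simp
    have hsum : ∑ k ∈ range n, (R ^ (k + 1)) y = -y := by
      have h := hrot
      rw [hs] at h
      exact eq_neg_of_add_eq_zero_left h
    have hdiff : t - R t = (c 0 - c n + 1 / ((n : ℝ) + 1)) • y := by
      rw [hRt', ht']
      have : ∀ k, c (k + 1) - c k = -(1 / ((n : ℝ) + 1)) := by
        intro k
        rw [hcdef]
        push_cast
        field_simp
        ring
      calc (∑ k ∈ range n, c (k + 1) • (R ^ (k + 1)) y + c 0 • y)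
            - (∑ k ∈ range n, c k • (R ^ (k + 1)) y + c n • y)
          = ∑ k ∈ range n, (c (k + 1) - c k) • (R ^ (k + 1)) y + (c 0 - c n) • y := by
            simp only [sub_smul, Finset.sum_sub_distrib]
            abel
        _ = (-(1 / ((n : ℝ) + 1))) • ∑ k ∈ range n, (R ^ (k + 1)) y + (c 0 - c n) • y := by
            rw [Finset.smul_sum]
            congr 1
            exact Finset.sum_congr rfl fun k _ => by rw [this k]
        _ = (c 0 - c n + 1 / ((n : ℝ) + 1)) • y := by
            rw [hsum]
            rw [smul_neg, neg_smul, neg_neg, add_smul]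
            abel
    have hc1 : c 0 - c n + 1 / ((n : ℝ) + 1) = 1 := by
      rw [hcdef]
      field_simp
      ring
    rw [ContinuousLinearMap.sub_apply, ContinuousLinearMap.one_apply, hdiff, hc1, one_smul]
  -- kernel description
  have hker : ∀ x : X, ((1 : X →L[ℝ] X) - R) x = 0 ↔ x ∈ D := by
    intro x
    rw [ContinuousLinearMap.sub_apply, ContinuousLinearMap.one_apply, sub_eq_zero, hD]
    exact ⟨fun h => h.symm, fun h => h.symm⟩
  -- final set equality
  ext x
  simp only [Set.mem_setOf_eq, hTy]
  constructor
  · intro hx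
    refine ⟨x - t, ?_, by abel⟩
    rw [← hker]
    rw [map_sub, hx, hkey, sub_self]
  · rintro ⟨d, hd, rfl⟩
    rw [map_add, hkey, (hker d).mpr hd, add_zero]
end

section
/- With R a linear isometry of order m, M = Id − R, and γ > 0: the resolvent of γM^{-1} equals Id − J_{(1/γ)M}, i.e., J_{γM^{-1}} = Id − (1/(( 1+1/γ)^m − (1/γ)^m)) Σ_{k=0}^{m−1} (1+1/γ)^{m−1−k} (1/γ)^k R^k, and this operator is a Banach contraction with Lipschitz constant 2/(2+γ). -/
set_option maxHeartbeats 1000000 in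
set_option synthInstance.maxHeartbeats 1000000 in
/-- The resolvent of `γM⁻¹` equals `Id − J_{(1/γ)M}` (given by the explicit formula),
and it is a Banach contraction with Lipschitz constant `2/(2+γ)`. -/
theorem resolvent_of_inverse
    {X : Type*} [NormedAddCommGroup X] [InnerProductSpace ℝ X] [CompleteSpace X]
    (m : ℕ) (hm : 2 ≤ m) (R : X →L[ℝ] X) (hR : ∀ x, ‖R x‖ = ‖x‖) (hRm : R ^ m = 1)
    (γ : ℝ) (hγ : 0 < γ) (Q : X →L[ℝ] X)
    (hQ : Q = 1 - ((1 + γ⁻¹) ^ m - (γ⁻¹) ^ m)⁻¹ •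
        ∑ k ∈ Finset.range m, ((1 + γ⁻¹) ^ (m - 1 - k) * γ⁻¹ ^ k) • R ^ k) :
    (∀ x z : X, (∃ w : X, ((1 : X →L[ℝ] X) - R) w = z ∧ x = z + γ • w) ↔ z = Q x) ∧
    ∀ x y : X, ‖Q x - Q y‖ ≤ (2 / (2 + γ)) * ‖x - y‖ := by
  have hγ0 : γ ≠ 0 := ne_of_gt hγ
  set δ : ℝ := γ⁻¹ with hδ
  have hδ0 : 0 < δ := inv_pos.mpr hγ
  have hδγ : δ * γ = 1 := inv_mul_cancel₀ hγ0
  set a : ℝ := 1 + δ with ha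
  have haδ : δ < a := by simp [ha]
  set c : ℝ := a ^ m - δ ^ m with hc
  have hc0 : 0 < c := sub_pos.mpr (pow_lt_pow_left₀ haδ hδ0.le (by omega))
  set S : X →L[ℝ] X := ∑ k ∈ Finset.range m, (a ^ (m - 1 - k) * δ ^ k) • R ^ k with hS
  set T : X →L[ℝ] X := a • 1 - δ • R with hT
  -- telescoping identity
  have hTS : T * S = c • (1 : X →L[ℝ] X) := by
    have step : T * S = ∑ k ∈ Finset.range m,
        ((fun k => (a ^ (m - k) * δ ^ k) • R ^ k) k
          - (fun k => (a ^ (m - k) * δ ^ k) • R ^ k) (k + 1)) := by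
      rw [hT, hS, sub_mul, smul_mul_assoc, one_mul, smul_mul_assoc, Finset.mul_sum,
        Finset.smul_sum, Finset.smul_sum, ← Finset.sum_sub_distrib]
      refine Finset.sum_congr rfl fun k hk => ?_
      have hk' : k < m := Finset.mem_range.mp hk
      have e1 : m - k = (m - 1 - k) + 1 := by omega
      have e2 : m - (k + 1) = m - 1 - k := by omega
      simp only [mul_smul_comm, smul_smul, ← pow_succ']
      congr 1
      · congr 1
        rw [e1, pow_succ]; ring
      · congr 1
        rw [e2, pow_succ]; ring
    rw [step, Finset.sum_range_sub' (fun k => (a ^ (m - k) * δ ^ k) • R ^ k) m]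
    simp only [Nat.sub_zero, pow_zero, mul_one, Nat.sub_self, one_mul, hRm]
    rw [hc, sub_smul]
  have hcomm : S * T = T * S := by
    rw [hS, Finset.sum_mul, Finset.mul_sum]
    refine Finset.sum_congr rfl fun k _ => ?_
    rw [smul_mul_assoc, mul_smul_comm]
    congr 1
    rw [hT, mul_sub, sub_mul, mul_smul_comm, mul_smul_comm, smul_mul_assoc, smul_mul_assoc,
      mul_one, one_mul, ← pow_succ, ← pow_succ']
  have hST : S * T = c • (1 : X →L[ℝ] X) := hcomm.trans hTS
  -- pointwise versions
  have hTSx : ∀ v : X, T (S v) = c • v := by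
    intro v
    have := congrArg (fun L : X →L[ℝ] X => L v) hTS
    simpa using this
  have hSTx : ∀ v : X, S (T v) = c • v := by
    intro v
    have := congrArg (fun L : X →L[ℝ] X => L v) hST
    simpa using this
  have hTx : ∀ v : X, T v = a • v - δ • R v := by
    intro v; rw [hT]; simp
  have hQx : ∀ v : X, Q v = v - c⁻¹ • S v := by
    intro v; rw [hQ]; simp
  have hTinj : ∀ z z' : X, T z = T z' → z = z' := by
    intro z z' h
    have h2 : c • z = c • z' := by rw [← hSTx, ← hSTx, h]
    exact smul_right_injective X hc0.ne' h2
  have hTQ : ∀ v : X, T (Q v) = δ • v - δ • R v := by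
    intro v
    rw [hQx, map_sub, map_smul, hTSx, smul_smul, inv_mul_cancel₀ hc0.ne', one_smul, hTx, ha]
    module
  constructor
  · intro x z
    constructor
    · rintro ⟨w, hw1, hw2⟩
      have hw : w = δ • (x - z) := by
        have h3 : γ • w = x - z := by rw [hw2]; abel
        rw [← h3, smul_smul, hδγ, one_smul]
      have hw1' : w - R w = z := by simpa using hw1
      apply hTinj
      rw [hTQ, hTx]
      rw [hw, map_smul, map_sub] at hw1'
      rw [ha]
      linear_combination (norm := module) -hw1'
    · intro hz
      refine ⟨δ • (x - z), ?_, ?_⟩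
      · have h := hTQ x
        rw [← hz, hTx, ha] at h
        simp only [ContinuousLinearMap.sub_apply, ContinuousLinearMap.one_apply, map_smul,
          map_sub]
        linear_combination (norm := module) -h
      · rw [smul_smul, mul_comm, hδγ, one_smul]; abel
  · intro x y
    have hmap : Q x - Q y = Q (x - y) := (map_sub Q x y).symm
    rw [hmap]
    set v := x - y with hv
    obtain ⟨u, hTu⟩ : ∃ u : X, T u = v :=
      ⟨c⁻¹ • S v, by rw [map_smul, hTSx, smul_smul, inv_mul_cancel₀ hc0.ne', one_smul]⟩
    have hSv : c⁻¹ • S v = u := by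
      rw [← hTu, hSTx, smul_smul, inv_mul_cancel₀ hc0.ne', one_smul]
    have hQv : Q v = δ • u - δ • R u := by
      rw [hQx, hSv, ← hTu, hTx, ha]
      module
    rw [hQv, ← hTu, hTx]
    have hRu : ‖R u‖ = ‖u‖ := hR u
    set t : ℝ := inner ℝ u (R u) with htdef
    have ht : |t| ≤ ‖u‖ * ‖u‖ := by
      rw [htdef]
      calc |inner ℝ u (R u)| ≤ ‖u‖ * ‖R u‖ := abs_real_inner_le_norm u (R u)
        _ = ‖u‖ * ‖u‖ := by rw [hRu]
    have h1 : ‖δ • u - δ • R u‖ ^ 2 = 2 * δ ^ 2 * ‖u‖ ^ 2 - 2 * δ ^ 2 * t := by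
      rw [norm_sub_sq_real, norm_smul, norm_smul, real_inner_smul_left,
        real_inner_smul_right, hRu, ← htdef, Real.norm_eq_abs, abs_of_pos hδ0]
      ring
    have h2 : ‖a • u - δ • R u‖ ^ 2
        = a ^ 2 * ‖u‖ ^ 2 + δ ^ 2 * ‖u‖ ^ 2 - 2 * a * δ * t := by
      rw [norm_sub_sq_real, norm_smul, norm_smul, real_inner_smul_left,
        real_inner_smul_right, hRu, ← htdef, Real.norm_eq_abs, Real.norm_eq_abs,
        abs_of_pos hδ0, abs_of_pos (by linarith : (0:ℝ) < a)]
      ring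
    have h2γ : (0:ℝ) < 2 + γ := by linarith
    rw [← pow_le_pow_iff_left₀ (norm_nonneg _) (by positivity) two_ne_zero, mul_pow, h1, h2]
    have hNt : 0 ≤ ‖u‖ ^ 2 + t := by nlinarith [abs_le.mp ht]
    rw [div_pow, div_mul_eq_mul_div, le_div_iff₀ (by positivity), ha]
    have expand : 2 ^ 2 * ((1 + δ) ^ 2 * ‖u‖ ^ 2 + δ ^ 2 * ‖u‖ ^ 2 - 2 * (1 + δ) * δ * t)
        - (2 * δ ^ 2 * ‖u‖ ^ 2 - 2 * δ ^ 2 * t) * (2 + γ) ^ 2 = 2 * (‖u‖ ^ 2 + t) := by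
      rw [hδ]
      field_simp
      ring
    linarith [expand, hNt]
end
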